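/- For integers m ≥ k > 0 and any two n×n complex matrices A and B, Tr[S_{m,k}(A,B)] = (m/k) · Tr[B·S_{m-1,k-1}(A,B)]. -/
import Mathlib


open Matrix BigOperators

/-- `S A B m k` is the sum of all words of length `m` in the matrices `A` and `B`
in which `B` appears exactly `k` times (the coefficient of `t^k` in `(A+tB)^m`). -/
noncomputable def S {n : ℕ} (A B : Matrix (Fin n) (Fin n) ℂ) (m k : ℕ) :
    Matrix (Fin n) (Fin n) ℂ :=
  ∑ f ∈ Finset.univ.filter
      (fun f : Fin m → Bool => (Finset.univ.filter (fun i => f i = true)).card = k),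
    (List.ofFn (fun i : Fin m => if f i then B else A)).prod

/-- The Frobenius (Euclidean) norm of a complex matrix, `‖A‖ = Tr[AA*]^{1/2}`. -/
noncomputable def frobNorm {n : ℕ} (A : Matrix (Fin n) (Fin n) ℂ) : ℝ :=
  Real.sqrt (Matrix.trace (A * Aᴴ)).re

lemma ofFn_rot {α : Type*} {m : ℕ} (v : Fin m → α) (c : Fin m) :
    List.ofFn (fun j => v (j + c)) = (List.ofFn v).rotate c.val := by
  apply List.ext_getElem
  · simp
  · intro i h1 h2
    simp only [List.getElem_ofFn, List.getElem_rotate, List.length_ofFn]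
    rfl

lemma trace_rotate {n : ℕ} (l : List (Matrix (Fin n) (Fin n) ℂ)) (c : ℕ) :
    Matrix.trace ((l.rotate c).prod) = Matrix.trace l.prod := by
  rw [List.rotate_eq_drop_append_take_mod, List.prod_append, Matrix.trace_mul_comm,
    ← List.prod_append, List.take_append_drop]

lemma count_cons {m : ℕ} (b : Bool) (h : Fin m → Bool) :
    (Finset.univ.filter (fun i : Fin (m + 1) => (Fin.cons b h : Fin (m + 1) → Bool) i = true)).card
      = (if b then 1 else 0) + (Finset.univ.filter (fun i => h i = true)).card := by
  rw [Finset.card_filter, Fin.sum_univ_succ, Finset.card_filter]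
  simp only [Fin.cons_zero, Fin.cons_succ]

lemma count_rot {m : ℕ} (f : Fin (m + 1) → Bool) (c : Fin (m + 1)) :
    (Finset.univ.filter fun i => f (i + c) = true).card
      = (Finset.univ.filter fun i => f i = true).card := by
  apply Finset.card_bij (fun a _ => a + c)
  · intro a ha
    simpa using (Finset.mem_filter.mp ha).2
  · intro a _ b _ hab
    exact add_right_cancel hab
  · intro b hb
    refine ⟨b - c, Finset.mem_filter.mpr ⟨Finset.mem_univ _, ?_⟩, by simp⟩
    simpa [sub_add_cancel] using (Finset.mem_filter.mp hb).2

theorem stmt_2 {n : ℕ} (m k : ℕ) (hk : 0 < k) (hkm : k ≤ m) (A B : Matrix (Fin n) (Fin n) ℂ) :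
    Matrix.trace (S A B m k) =
      ((m : ℂ) / (k : ℂ)) * Matrix.trace (B * S A B (m - 1) (k - 1)) := by
  obtain ⟨k', rfl⟩ : ∃ k', k = k' + 1 := ⟨k - 1, (Nat.succ_pred_eq_of_pos hk).symm⟩
  obtain ⟨m', rfl⟩ : ∃ m', m = m' + 1 :=
    ⟨m - 1, (Nat.succ_pred_eq_of_pos (lt_of_lt_of_le hk hkm)).symm⟩
  simp only [Nat.add_sub_cancel]
  set T : (Fin (m' + 1) → Bool) → ℂ :=
    fun f => Matrix.trace (List.ofFn (fun i => if f i then B else A)).prod with hT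
  set F : Finset (Fin (m' + 1) → Bool) := Finset.univ.filter
      (fun f => (Finset.univ.filter (fun i => f i = true)).card = k' + 1) with hF
  -- rotation invariance of T
  have key : ∀ (c : Fin (m' + 1)) (f : Fin (m' + 1) → Bool), T (fun j => f (j + c)) = T f := by
    intro c f
    have h1 : (fun i : Fin (m' + 1) => if (fun j => f (j + c)) i then B else A)
        = fun j : Fin (m' + 1) => (fun i => if f i then B else A) (j + c) := rfl
    simp only [hT, h1, ofFn_rot (fun i : Fin (m' + 1) => if f i then B else A) c]
    exact trace_rotate _ _
  -- LHS as a sum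
  have hL : Matrix.trace (S A B (m' + 1) (k' + 1)) = ∑ f ∈ F, T f := by
    rw [S, Matrix.trace_sum]
  -- RHS as a sum over words starting with B
  have hR : Matrix.trace (B * S A B m' k') = ∑ g ∈ F.filter (fun g => g 0 = true), T g := by
    rw [S, Finset.mul_sum, Matrix.trace_sum]
    symm
    have hcons : ∀ h : Fin m' → Bool, T (Fin.cons true h)
        = Matrix.trace (B * (List.ofFn (fun i => if h i then B else A)).prod) := by
      intro h
      simp only [hT, List.ofFn_succ, Fin.cons_zero, Fin.cons_succ, if_true, List.prod_cons]
    apply Finset.sum_nbij' (i := fun g => Fin.tail g) (j := fun h => Fin.cons true h)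
    · intro g hg
      simp only [hF, Finset.mem_filter, Finset.mem_univ, true_and] at hg ⊢
      have h2 := count_cons (g 0) (Fin.tail g)
      rw [Fin.cons_self_tail, hg.1, hg.2] at h2
      simp only [if_true] at h2
      omega
    · intro h hh
      simp only [hF, Finset.mem_filter, Finset.mem_univ, true_and] at hh ⊢
      refine ⟨?_, by simp⟩
      rw [count_cons, hh]
      simp only [if_true]
      omega
    · intro g hg
      simp only [Finset.mem_filter] at hg
      rw [← hg.2]
      exact Fin.cons_self_tail g
    · intro h _
      simp [Fin.tail_cons]
    · intro g hg
      simp only [Finset.mem_filter] at hg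
      have hgeq : g = Fin.cons true (Fin.tail g) := by
        rw [← hg.2]; exact (Fin.cons_self_tail g).symm
      rw [hgeq, Fin.tail_cons]
      exact hcons (Fin.tail g)
  -- rotation bijection for each c
  have hrot : ∀ c : Fin (m' + 1),
      ∑ f ∈ F, (if f c then T f else 0) = ∑ g ∈ F, (if g 0 then T g else 0) := by
    intro c
    apply Finset.sum_nbij' (i := fun f => fun j => f (j + c)) (j := fun g => fun j => g (j - c))
    · intro f hf
      simp only [hF, Finset.mem_filter, Finset.mem_univ, true_and] at hf ⊢
      rw [count_rot]; exact hf
    · intro g hg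
      simp only [hF, Finset.mem_filter, Finset.mem_univ, true_and] at hg ⊢
      simp only [sub_eq_add_neg]
      rw [count_rot g (-c)]; exact hg
    · intro f _; funext j; simp
    · intro g _; funext j; simp
    · intro f _
      rw [key c f]
      simp only [zero_add]
  -- the double counting identity
  have main : ((k' : ℂ) + 1) * ∑ f ∈ F, T f
      = ((m' : ℂ) + 1) * ∑ g ∈ F.filter (fun g => g 0 = true), T g := by
    have step1 : ∀ f ∈ F, ((k' : ℂ) + 1) * T f = ∑ c : Fin (m' + 1), (if f c then T f else 0) := by
      intro f hf
      simp only [hF, Finset.mem_filter, Finset.mem_univ, true_and] at hf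
      rw [← Finset.sum_filter, Finset.sum_const, hf, nsmul_eq_mul]
      push_cast
      ring
    calc ((k' : ℂ) + 1) * ∑ f ∈ F, T f
        = ∑ f ∈ F, ((k' : ℂ) + 1) * T f := Finset.mul_sum _ _ _
      _ = ∑ f ∈ F, ∑ c : Fin (m' + 1), (if f c then T f else 0) := Finset.sum_congr rfl step1
      _ = ∑ c : Fin (m' + 1), ∑ f ∈ F, (if f c then T f else 0) := Finset.sum_comm
      _ = ∑ _c : Fin (m' + 1), ∑ g ∈ F, (if g 0 then T g else 0) :=
          Finset.sum_congr rfl (fun c _ => hrot c)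
      _ = ((m' : ℂ) + 1) * ∑ g ∈ F, (if g 0 then T g else 0) := by
          rw [Finset.sum_const, Finset.card_univ, Fintype.card_fin, nsmul_eq_mul]
          push_cast; ring
      _ = ((m' : ℂ) + 1) * ∑ g ∈ F.filter (fun g => g 0 = true), T g := by
          conv_rhs => rw [Finset.sum_filter]
  rw [hL, hR]
  have hk0 : ((k' : ℂ) + 1) ≠ 0 := by
    exact_mod_cast (Nat.cast_add_one_ne_zero k' : ((k' : ℂ) + 1) ≠ 0)
  push_cast
  rw [div_mul_eq_mul_div, eq_div_iff hk0, mul_comm _ ((k' : ℂ) + 1), main]
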